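/- Let c, d > 2 and n = c + d. In the polynomial ring ℂ[T_{ij}, T_∞ : 1 ≤ i < j ≤ n], let J be the ideal generated by T_∞, the binomials −T_{ik}T_{jl} + T_{il}T_{jk} for i < j ≤ c < k < l, and the trinomials T_{ij}T_{kl} − T_{ik}T_{jl} + T_{il}T_{jk} for all other index quadruples 1 ≤ i < j < k < l ≤ n. Then J is a prime ideal. -/

import Mathlib

open MvPolynomial

/-- Index set for the Plücker variables `T_{ij}`, `i < j` (0-indexed: `1 ≤ i` becomes `0 ≤ i`,
`j ≤ n` becomes `j.val < n`). -/
abbrev PIdx (n : ℕ) := {p : Fin n × Fin n // p.1 < p.2}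

/-- Index set for the variables `T_{ij}` together with the extra variable `T_∞`. -/
abbrev Idx (n : ℕ) := PIdx n ⊕ Unit

/-- The variable `T_{ij}`. -/
noncomputable def W {n : ℕ} (i j : Fin n) (h : i < j) : MvPolynomial (Idx n) ℂ :=
  X (Sum.inl ⟨(i, j), h⟩)

/-- The variable `T_∞`. -/
noncomputable def Tinf {n : ℕ} : MvPolynomial (Idx n) ℂ := X (Sum.inr ())

/-- Generators of the ideal `I`: `T_∞T_{ij}T_{kl} - T_{ik}T_{jl} + T_{il}T_{jk}` for
quadruples `i < j ≤ c < k < l` (1-indexed; `j ≤ c` is `j.val < c` and `c + 1 ≤ k` is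
`c ≤ k.val` in 0-indexed terms), and the Plücker trinomials
`T_{ij}T_{kl} - T_{ik}T_{jl} + T_{il}T_{jk}` for all other quadruples `i < j < k < l`. -/
def IGens (c n : ℕ) : Set (MvPolynomial (Idx n) ℂ) :=
  {P | ∃ (i j k l : Fin n) (hij : i < j) (hjk : j < k) (hkl : k < l),
    ((j.val < c ∧ c ≤ k.val) ∧
      P = Tinf * W i j hij * W k l hkl - W i k (hij.trans hjk) * W j l (hjk.trans hkl)
            + W i l (hij.trans (hjk.trans hkl)) * W j k hjk) ∨
    (¬(j.val < c ∧ c ≤ k.val) ∧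
      P = W i j hij * W k l hkl - W i k (hij.trans hjk) * W j l (hjk.trans hkl)
            + W i l (hij.trans (hjk.trans hkl)) * W j k hjk)}

/-- Generators of the ideal `J = I + (T_∞)`: the variable `T_∞`, the binomials
`-T_{ik}T_{jl} + T_{il}T_{jk}` for quadruples `i < j ≤ c < k < l`, and the Plücker
trinomials for all other quadruples `i < j < k < l`. -/
def JGens (c n : ℕ) : Set (MvPolynomial (Idx n) ℂ) :=
  insert Tinf
    {P | ∃ (i j k l : Fin n) (hij : i < j) (hjk : j < k) (hkl : k < l),
      ((j.val < c ∧ c ≤ k.val) ∧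
        P = - W i k (hij.trans hjk) * W j l (hjk.trans hkl)
              + W i l (hij.trans (hjk.trans hkl)) * W j k hjk) ∨
      (¬(j.val < c ∧ c ≤ k.val) ∧
        P = W i j hij * W k l hkl - W i k (hij.trans hjk) * W j l (hjk.trans hkl)
              + W i l (hij.trans (hjk.trans hkl)) * W j k hjk)}

namespace Stmt7

abbrev V (n : ℕ) := Fin (4*n)

def va {n : ℕ} (u : Fin n) : V n := ⟨u.val, by omega⟩
def vf {n : ℕ} (u : Fin n) : V n := ⟨n + u.val, by omega⟩
def ve {n : ℕ} (u : Fin n) : V n := ⟨2*n + u.val, by omega⟩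
def vb {n : ℕ} (u : Fin n) : V n := ⟨3*n + u.val, by omega⟩

noncomputable def tgt (c : ℕ) {n : ℕ} : Idx n → MvPolynomial (V n) ℂ
  | Sum.inl P =>
      if P.1.2.val < c then X (va P.1.1) * X (vb P.1.2) - X (va P.1.2) * X (vb P.1.1)
      else if P.1.1.val < c then X (va P.1.1) * X (ve P.1.2)
      else X (ve P.1.2) * X (vf P.1.1) - X (ve P.1.1) * X (vf P.1.2)
  | Sum.inr _ => 0

noncomputable def phi (c n : ℕ) : MvPolynomial (Idx n) ℂ →ₐ[ℂ] MvPolynomial (V n) ℂ :=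
  aeval (tgt c)

variable {c n : ℕ}

lemma phi_W_p {u v : Fin n} (h : u < v) (hv : v.val < c) :
    phi c n (W u v h) = X (va u) * X (vb v) - X (va v) * X (vb u) := by
  simp [phi, W, tgt, hv]

lemma phi_W_m {u v : Fin n} (h : u < v) (hu : u.val < c) (hv : ¬ v.val < c) :
    phi c n (W u v h) = X (va u) * X (ve v) := by
  simp [phi, W, tgt, hu, hv]

lemma phi_W_q {u v : Fin n} (h : u < v) (hu : ¬ u.val < c) :
    phi c n (W u v h) = X (ve v) * X (vf u) - X (ve u) * X (vf v) := by
  have hv : ¬ v.val < c := by have := (Fin.lt_def.mp h); omega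
  simp [phi, W, tgt, hu, hv]

lemma phi_Tinf : phi c n (Tinf) = 0 := by simp [phi, Tinf, tgt]

lemma span_le_ker : Ideal.span (JGens c n) ≤ RingHom.ker (phi c n).toRingHom := by
  rw [Ideal.span_le]
  rintro P (rfl | ⟨i, j, k, l, hij, hjk, hkl, H⟩)
  · simp [SetLike.mem_coe, RingHom.mem_ker, phi_Tinf]
  have hij' := Fin.lt_def.mp hij
  have hjk' := Fin.lt_def.mp hjk
  have hkl' := Fin.lt_def.mp hkl
  simp only [SetLike.mem_coe, RingHom.mem_ker, AlgHom.toRingHom_eq_coe, RingHom.coe_coe]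
  rcases H with ⟨⟨hj, hk⟩, rfl⟩ | ⟨hnot, rfl⟩
  · have hi : i.val < c := by omega
    have hk' : ¬ k.val < c := by omega
    have hl' : ¬ l.val < c := by omega
    simp only [map_add, map_mul, map_neg, map_sub,
      phi_W_m (hij.trans hjk) hi hk', phi_W_m (hjk.trans hkl) hj hl',
      phi_W_m (hij.trans (hjk.trans hkl)) hi hl', phi_W_m hjk hj hk']
    ring
  · by_cases hl : l.val < c
    · -- all four < c
      have hi : i.val < c := by omega
      have hj : j.val < c := by omega
      have hk : k.val < c := by omega
      simp only [map_add, map_mul, map_sub,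
        phi_W_p hij hj, phi_W_p hkl hl, phi_W_p (hij.trans hjk) hk,
        phi_W_p (hjk.trans hkl) hl, phi_W_p (hij.trans (hjk.trans hkl)) hl, phi_W_p hjk hk]
      ring
    · by_cases hk : k.val < c
      · -- i,j,k < c ≤ l
        have hi : i.val < c := by omega
        have hj : j.val < c := by omega
        simp only [map_add, map_mul, map_sub,
          phi_W_p hij hj, phi_W_m hkl hk hl, phi_W_p (hij.trans hjk) hk,
          phi_W_m (hjk.trans hkl) hj hl, phi_W_m (hij.trans (hjk.trans hkl)) hi hl,
          phi_W_p hjk hk]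
        ring
      · by_cases hj : j.val < c
        · exact absurd ⟨hj, by omega⟩ hnot
        · by_cases hi : i.val < c
          · -- i < c ≤ j,k,l
            simp only [map_add, map_mul, map_sub,
              phi_W_m hij hi hj, phi_W_q hkl hk, phi_W_m (hij.trans hjk) hi hk,
              phi_W_q (hjk.trans hkl) hj, phi_W_m (hij.trans (hjk.trans hkl)) hi hl,
              phi_W_q hjk hj]
            ring
          · -- all ≥ c
            simp only [map_add, map_mul, map_sub,
              phi_W_q hij hi, phi_W_q hkl hk, phi_W_q (hij.trans hjk) hi,
              phi_W_q (hjk.trans hkl) hj, phi_W_q (hij.trans (hjk.trans hkl)) hi,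
              phi_W_q hjk hj]
            ring

section PartB
variable {c n : ℕ}

def nested {n : ℕ} (P Q : PIdx n) : Prop := P.1.1 < Q.1.1 ∧ Q.1.2 < P.1.2

def StdM {n : ℕ} (μ : Idx n →₀ ℕ) : Prop :=
  μ (Sum.inr ()) = 0 ∧
  ∀ P Q : PIdx n, μ (Sum.inl P) ≠ 0 → μ (Sum.inl Q) ≠ 0 → ¬ nested P Q

noncomputable def SM (n : ℕ) : Submodule ℂ (MvPolynomial (Idx n) ℂ) where
  carrier := {f | ∀ e ∈ f.support, StdM e}
  add_mem' := by
    intro a b ha hb e he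
    rcases Finset.mem_union.mp (MvPolynomial.support_add he) with h | h
    · exact ha e h
    · exact hb e h
  zero_mem' := by simp
  smul_mem' := by
    intro r f hf e he
    exact hf e (MvPolynomial.support_smul he)

def wgt {n : ℕ} : Idx n → ℕ
  | Sum.inl P => (P.1.2.val - P.1.1.val)^2
  | Sum.inr _ => 0

def meas {n : ℕ} (μ : Idx n →₀ ℕ) : ℕ := μ.sum fun x k => k * wgt x

lemma meas_add (μ ν : Idx n →₀ ℕ) : meas (μ + ν) = meas μ + meas ν :=
  Finsupp.sum_add_index' (fun a => zero_mul _) (fun a b₁ b₂ => add_mul _ _ _)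

lemma meas_single (x : Idx n) (k : ℕ) : meas (Finsupp.single x k) = k * wgt x :=
  Finsupp.sum_single_index (zero_mul _)

lemma sq_ineq1 {w x y z : ℕ} (h1 : w < x) (h2 : x < y) (h3 : y < z) :
    (y - w)^2 + (z - x)^2 < (z - w)^2 + (y - x)^2 := by
  zify [le_of_lt h1, le_of_lt h2, le_of_lt h3, le_of_lt (h1.trans h2),
    le_of_lt (h2.trans h3), le_of_lt ((h1.trans h2).trans h3)]
  nlinarith [h1, h2, h3]

lemma sq_ineq2 {w x y z : ℕ} (h1 : w < x) (h2 : x < y) (h3 : y < z) :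
    (x - w)^2 + (z - y)^2 < (z - w)^2 + (y - x)^2 := by
  zify [le_of_lt h1, le_of_lt h2, le_of_lt h3, le_of_lt (h1.trans h2),
    le_of_lt (h2.trans h3), le_of_lt ((h1.trans h2).trans h3)]
  nlinarith [h1, h2, h3]

lemma mono_decomp {μ : Idx n →₀ ℕ} {P Q : PIdx n} (hP : μ (Sum.inl P) ≠ 0)
    (hQ : μ (Sum.inl Q) ≠ 0) (hPQ : P ≠ Q) :
    μ = Finsupp.single (Sum.inl P) 1 + (Finsupp.single (Sum.inl Q) 1 +
      (μ - Finsupp.single (Sum.inl P) 1 - Finsupp.single (Sum.inl Q) 1)) := by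
  have hPQ' : (Sum.inl P : Idx n) ≠ Sum.inl Q := by simpa using hPQ
  ext x
  simp only [Finsupp.add_apply, Finsupp.sub_apply, Finsupp.single_apply]
  by_cases h1 : (Sum.inl P : Idx n) = x <;> by_cases h2 : (Sum.inl Q : Idx n) = x
  · exact absurd (h1.trans h2.symm) hPQ'
  · subst h1; simp [h2]; omega
  · subst h2; simp [h1]; omega
  · simp [h1, h2]

lemma X_mul_mono (a b : Idx n) (ν : Idx n →₀ ℕ) :
    MvPolynomial.monomial (Finsupp.single a 1 + (Finsupp.single b 1 + ν)) (1:ℂ)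
      = X a * X b * MvPolynomial.monomial ν 1 := by
  rw [MvPolynomial.X, MvPolynomial.X, MvPolynomial.monomial_mul, MvPolynomial.monomial_mul]
  simp [add_assoc]

lemma mono_mem_aux (N : ℕ) : ∀ μ : Idx n →₀ ℕ, meas μ < N →
    (MvPolynomial.monomial μ (1:ℂ)) ∈ SM n ⊔ (Ideal.span (JGens c n)).restrictScalars ℂ := by
  induction N with
  | zero => intro μ h; omega
  | succ N ih =>
    intro μ hm
    by_cases hinf : μ (Sum.inr ()) = 0
    · by_cases hstd : ∀ P Q : PIdx n, μ (Sum.inl P) ≠ 0 → μ (Sum.inl Q) ≠ 0 → ¬ nested P Q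
      · apply Submodule.mem_sup_left
        intro e he
        rw [MvPolynomial.support_monomial, if_neg one_ne_zero] at he
        rcases Finset.mem_singleton.mp he with rfl
        exact ⟨hinf, hstd⟩
      · push_neg at hstd
        obtain ⟨P, Q, hP, hQ, hnest⟩ := hstd
        obtain ⟨hwx, hyz⟩ := hnest
        set w := P.1.1 with hw
        set x := Q.1.1 with hx
        set y := Q.1.2 with hy
        set z := P.1.2 with hz
        have hxy : x < y := Q.2
        have hPQ : P ≠ Q := by
          intro h; subst h; exact lt_irrefl _ hwx
        set μ' := μ - Finsupp.single (Sum.inl P) 1 - Finsupp.single (Sum.inl Q) 1 with hμ'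
        have hdec := mono_decomp hP hQ hPQ
        have hwy : w < y := hwx.trans hxy
        have hxz : x < z := hxy.trans hyz
        have hwz : w < z := hwy.trans hyz
        set Pwy : PIdx n := ⟨(w, y), hwy⟩
        set Qxz : PIdx n := ⟨(x, z), hxz⟩
        set Pwx : PIdx n := ⟨(w, x), hwx⟩
        set Qyz : PIdx n := ⟨(y, z), hyz⟩
        have hmono : MvPolynomial.monomial μ (1:ℂ)
            = W w z hwz * W x y hxy * MvPolynomial.monomial μ' 1 := by
          conv_lhs => rw [hdec]
          rw [X_mul_mono]
          rfl
        -- measure facts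
        have hmeas : meas μ = (z.val - w.val)^2 + ((y.val - x.val)^2 + meas μ') := by
          conv_lhs => rw [hdec]
          rw [meas_add, meas_add, meas_single, meas_single]
          simp [wgt]
          rfl
        have hm1 : meas (Finsupp.single (Sum.inl Pwy) 1 + (Finsupp.single (Sum.inl Qxz) 1 + μ')) < N := by
          rw [meas_add, meas_add, meas_single, meas_single]
          simp only [wgt, one_mul]
          have := sq_ineq1 (Fin.lt_def.mp hwx) (Fin.lt_def.mp hxy) (Fin.lt_def.mp hyz)
          have e1 : (Pwy.1.2.val - Pwy.1.1.val)^2 = (y.val - w.val)^2 := rfl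
          have e2 : (Qxz.1.2.val - Qxz.1.1.val)^2 = (z.val - x.val)^2 := rfl
          omega
        have hm2 : meas (Finsupp.single (Sum.inl Pwx) 1 + (Finsupp.single (Sum.inl Qyz) 1 + μ')) < N := by
          rw [meas_add, meas_add, meas_single, meas_single]
          simp only [wgt, one_mul]
          have := sq_ineq2 (Fin.lt_def.mp hwx) (Fin.lt_def.mp hxy) (Fin.lt_def.mp hyz)
          have e1 : (Pwx.1.2.val - Pwx.1.1.val)^2 = (x.val - w.val)^2 := rfl
          have e2 : (Qyz.1.2.val - Qyz.1.1.val)^2 = (z.val - y.val)^2 := rfl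
          omega
        have ht1 : W w y hwy * W x z hxz * MvPolynomial.monomial μ' 1
            = MvPolynomial.monomial (Finsupp.single (Sum.inl Pwy) 1 + (Finsupp.single (Sum.inl Qxz) 1 + μ')) (1:ℂ) := by
          rw [X_mul_mono]; rfl
        have ht2 : W w x hwx * W y z hyz * MvPolynomial.monomial μ' 1
            = MvPolynomial.monomial (Finsupp.single (Sum.inl Pwx) 1 + (Finsupp.single (Sum.inl Qyz) 1 + μ')) (1:ℂ) := by
          rw [X_mul_mono]; rfl
        by_cases hmix : x.val < c ∧ c ≤ y.val
        · -- binomial case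
          have hg : (- W w y hwy * W x z hxz + W w z hwz * W x y hxy) ∈ JGens c n := by
            right
            exact ⟨w, x, y, z, hwx, hxy, hyz, Or.inl ⟨hmix, rfl⟩⟩
          have : MvPolynomial.monomial μ (1:ℂ)
              = (- W w y hwy * W x z hxz + W w z hwz * W x y hxy) * MvPolynomial.monomial μ' 1
                + W w y hwy * W x z hxz * MvPolynomial.monomial μ' 1 := by
            rw [hmono]; ring
          rw [this]
          apply Submodule.add_mem
          · apply Submodule.mem_sup_right
            exact Ideal.mul_mem_right _ _ (Ideal.subset_span hg)
          · rw [ht1]; exact ih _ hm1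
        · -- trinomial case
          have hg : (W w x hwx * W y z hyz - W w y hwy * W x z hxz
              + W w z hwz * W x y hxy) ∈ JGens c n := by
            right
            exact ⟨w, x, y, z, hwx, hxy, hyz, Or.inr ⟨hmix, rfl⟩⟩
          have : MvPolynomial.monomial μ (1:ℂ)
              = (W w x hwx * W y z hyz - W w y hwy * W x z hxz + W w z hwz * W x y hxy)
                  * MvPolynomial.monomial μ' 1
                + W w y hwy * W x z hxz * MvPolynomial.monomial μ' 1
                - W w x hwx * W y z hyz * MvPolynomial.monomial μ' 1 := by
            rw [hmono]; ring
          rw [this]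
          apply Submodule.sub_mem
          apply Submodule.add_mem
          · apply Submodule.mem_sup_right
            exact Ideal.mul_mem_right _ _ (Ideal.subset_span hg)
          · rw [ht1]; exact ih _ hm1
          · rw [ht2]; exact ih _ hm2
    · -- Tinf divides the monomial
      have hdec : μ = Finsupp.single (Sum.inr () : Idx n) 1 + (μ - Finsupp.single (Sum.inr ()) 1) := by
        ext x
        simp only [Finsupp.add_apply, Finsupp.sub_apply, Finsupp.single_apply]
        by_cases h : (Sum.inr () : Idx n) = x
        · subst h; simp; omega
        · simp [h]
      apply Submodule.mem_sup_right
      have : MvPolynomial.monomial μ (1:ℂ)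
          = Tinf * MvPolynomial.monomial (μ - Finsupp.single (Sum.inr ()) 1) 1 := by
        conv_lhs => rw [hdec]
        rw [Tinf, MvPolynomial.X, MvPolynomial.monomial_mul, one_mul]
      rw [this]
      exact Ideal.mul_mem_right _ _ (Ideal.subset_span (Set.mem_insert _ _))

lemma sup_top : SM n ⊔ (Ideal.span (JGens c n)).restrictScalars ℂ = ⊤ := by
  rw [eq_top_iff]
  intro f _
  rw [MvPolynomial.as_sum f]
  apply Submodule.sum_mem
  intro v hv
  have : MvPolynomial.monomial v (MvPolynomial.coeff v f)
      = (MvPolynomial.coeff v f) • MvPolynomial.monomial v (1:ℂ) := by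
    rw [MvPolynomial.smul_monomial, smul_eq_mul, mul_one]
  rw [this]
  exact Submodule.smul_mem _ _ (mono_mem_aux (c := c) (meas v + 1) v (Nat.lt_succ_self _))

end PartB

section PartC
open AddMonoidAlgebra Finsupp
variable {c n : ℕ}

noncomputable def lead (c : ℕ) {n : ℕ} : Idx n → (V n →₀ ℕ)
  | Sum.inl P =>
      if P.1.2.val < c then Finsupp.single (va P.1.1) 1 + Finsupp.single (vb P.1.2) 1
      else if P.1.1.val < c then Finsupp.single (va P.1.1) 1 + Finsupp.single (ve P.1.2) 1
      else Finsupp.single (ve P.1.2) 1 + Finsupp.single (vf P.1.1) 1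
  | Sum.inr _ => 0

noncomputable def Lsum (c : ℕ) {n : ℕ} (μ : Idx n →₀ ℕ) : V n →₀ ℕ :=
  μ.sum fun p k => k • lead c p

lemma Lsum_single (c : ℕ) (a : Idx n) (b : ℕ) :
    Lsum c (Finsupp.single a b) = b • lead c a :=
  Finsupp.sum_single_index (zero_smul _ _)

lemma Lsum_sadd (c : ℕ) (a : Idx n) (b : ℕ) (f : Idx n →₀ ℕ) :
    Lsum c (Finsupp.single a b + f) = b • lead c a + Lsum c f := by
  rw [Lsum,
    Finsupp.sum_add_index' (h := fun p k => k • lead c p) (fun x => zero_smul ℕ _)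
      (fun x k1 k2 => add_smul k1 k2 _),
    ← Lsum, ← Lsum, Lsum_single]

lemma ltP {u v : Fin n} (h : u < v) :
    (toLex (Finsupp.single (va v) 1 + Finsupp.single (vb u) 1) : Lex (V n →₀ ℕ)) <
      toLex (Finsupp.single (va u) 1 + Finsupp.single (vb v) 1) := by
  rw [Finsupp.Lex.lt_iff]
  have hv := u.isLt; have hvv := v.isLt
  have h' : u.val < v.val := h
  refine ⟨va u, fun j hj => ?_, ?_⟩
  · have hj' : j.val < u.val := hj
    simp only [ofLex_toLex, Finsupp.add_apply, Finsupp.single_apply, va, vb, Fin.ext_iff]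
    split_ifs <;> omega
  · simp only [ofLex_toLex, Finsupp.add_apply, Finsupp.single_apply, va, vb, Fin.ext_iff]
    split_ifs <;> omega

lemma ltQ {u v : Fin n} (h : u < v) :
    (toLex (Finsupp.single (ve u) 1 + Finsupp.single (vf v) 1) : Lex (V n →₀ ℕ)) <
      toLex (Finsupp.single (ve v) 1 + Finsupp.single (vf u) 1) := by
  rw [Finsupp.Lex.lt_iff]
  have hv := u.isLt; have hvv := v.isLt
  have h' : u.val < v.val := h
  refine ⟨vf u, fun j hj => ?_, ?_⟩
  · have hj' : j.val < n + u.val := hj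
    simp only [ofLex_toLex, Finsupp.add_apply, Finsupp.single_apply, ve, vf, Fin.ext_iff]
    split_ifs <;> omega
  · simp only [ofLex_toLex, Finsupp.add_apply, Finsupp.single_apply, ve, vf, Fin.ext_iff]
    split_ifs <;> omega

lemma XX_mono (x y : V n) : (X x * X y : MvPolynomial (V n) ℂ)
    = MvPolynomial.monomial (Finsupp.single x 1 + Finsupp.single y 1) 1 := by
  rw [MvPolynomial.X, MvPolynomial.X, MvPolynomial.monomial_mul, one_mul]

lemma supDegree_mono (e : V n →₀ ℕ) {r : ℂ} (hr : r ≠ 0) :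
    AddMonoidAlgebra.supDegree (toLex : (V n →₀ ℕ) → Lex (V n →₀ ℕ))
      (MvPolynomial.monomial e r) = toLex e := by
  rw [← MvPolynomial.single_eq_monomial]
  exact AddMonoidAlgebra.supDegree_single_ne_zero _ hr

lemma leadingCoeff_mono (e : V n →₀ ℕ) (r : ℂ) :
    AddMonoidAlgebra.leadingCoeff (toLex : (V n →₀ ℕ) → Lex (V n →₀ ℕ))
      (MvPolynomial.monomial e r) = r := by
  rw [← MvPolynomial.single_eq_monomial]
  exact AddMonoidAlgebra.leadingCoeff_single toLex.injective _ _

lemma binom_deg_monic {m1 m2 : V n →₀ ℕ} (hlt : (toLex m2 : Lex (V n →₀ ℕ)) < toLex m1) :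
    AddMonoidAlgebra.supDegree (toLex : (V n →₀ ℕ) → Lex (V n →₀ ℕ))
      ((MvPolynomial.monomial m1 1 - MvPolynomial.monomial m2 1 : MvPolynomial (V n) ℂ)) = toLex m1
    ∧ AddMonoidAlgebra.Monic (toLex : (V n →₀ ℕ) → Lex (V n →₀ ℕ))
      ((MvPolynomial.monomial m1 1 - MvPolynomial.monomial m2 1 : MvPolynomial (V n) ℂ)) := by
  have h2 : AddMonoidAlgebra.supDegree (toLex : (V n →₀ ℕ) → Lex (V n →₀ ℕ))
      (-(MvPolynomial.monomial m2 1) : MvPolynomial (V n) ℂ) < toLex m1 := by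
    rw [AddMonoidAlgebra.supDegree_neg, supDegree_mono _ one_ne_zero]; exact hlt
  have e : (MvPolynomial.monomial m1 1 - MvPolynomial.monomial m2 1 : MvPolynomial (V n) ℂ)
      = MvPolynomial.monomial m1 1 + (-(MvPolynomial.monomial m2 1)) := by ring
  constructor
  · rw [e, AddMonoidAlgebra.supDegree_add_eq_left (by rw [supDegree_mono _ one_ne_zero]; exact h2),
      supDegree_mono _ one_ne_zero]
  · rw [AddMonoidAlgebra.Monic, e,
      AddMonoidAlgebra.leadingCoeff_add_eq_left (by rw [supDegree_mono _ one_ne_zero]; exact h2),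
      leadingCoeff_mono]

lemma phiX_deg_monic (p : Idx n) (hp : p ≠ Sum.inr ()) :
    AddMonoidAlgebra.supDegree (toLex : (V n →₀ ℕ) → Lex (V n →₀ ℕ)) (phi c n (X p))
      = toLex (lead c p)
    ∧ AddMonoidAlgebra.Monic (toLex : (V n →₀ ℕ) → Lex (V n →₀ ℕ)) (phi c n (X p)) := by
  obtain P | u := p
  · have hφ : phi c n (X (Sum.inl P)) = tgt c (Sum.inl P) := by simp [phi]
    have hlt := P.2
    rw [hφ]
    by_cases h1 : P.1.2.val < c
    · have h1' : P.1.1.val < c := by have : P.1.1.val < P.1.2.val := hlt; omega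
      rw [tgt, lead]
      simp only [h1, if_true]
      rw [XX_mono, XX_mono]
      exact binom_deg_monic (ltP hlt)
    · by_cases h2 : P.1.1.val < c
      · rw [tgt, lead]
        simp only [h1, if_false, h2, if_true]
        rw [XX_mono]
        exact ⟨supDegree_mono _ one_ne_zero, by
          rw [AddMonoidAlgebra.Monic, leadingCoeff_mono]⟩
      · rw [tgt, lead]
        simp only [h1, if_false, h2, if_true]
        rw [XX_mono, XX_mono]
        exact binom_deg_monic (ltQ hlt)
  · exact absurd rfl hp

lemma phi_mono_deg_monic (μ : Idx n →₀ ℕ) (h : μ (Sum.inr ()) = 0) :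
    AddMonoidAlgebra.supDegree (toLex : (V n →₀ ℕ) → Lex (V n →₀ ℕ))
        (phi c n (MvPolynomial.monomial μ 1)) = toLex (Lsum c μ)
    ∧ AddMonoidAlgebra.Monic (toLex : (V n →₀ ℕ) → Lex (V n →₀ ℕ))
        (phi c n (MvPolynomial.monomial μ 1)) := by
  induction μ using Finsupp.induction with
  | zero =>
    have : (MvPolynomial.monomial (0 : Idx n →₀ ℕ) (1:ℂ)) = 1 := by
      simp [MvPolynomial.monomial_eq]
    rw [this, map_one]
    constructor
    · have : (1 : MvPolynomial (V n) ℂ) = MvPolynomial.monomial 0 1 := by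
        simp [MvPolynomial.monomial_eq]
      rw [this, supDegree_mono _ one_ne_zero]
      rfl
    · exact AddMonoidAlgebra.monic_one toLex.injective
  | single_add a b f ha hb ih =>
    have hane : a ≠ Sum.inr () := by
      intro rfl'
      subst rfl'
      simp only [Finsupp.add_apply, Finsupp.single_eq_same] at h
      omega
    have hf : f (Sum.inr ()) = 0 := by
      by_cases hh : a = Sum.inr ()
      · exact absurd hh hane
      · simpa [Finsupp.single_apply, hh] using h
    obtain ⟨ihd, ihm⟩ := ih hf
    have hsplit : MvPolynomial.monomial (Finsupp.single a b + f) (1:ℂ)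
        = X a ^ b * MvPolynomial.monomial f 1 := by
      rw [MvPolynomial.X_pow_eq_monomial, MvPolynomial.monomial_mul, one_mul]
    obtain ⟨pd, pm⟩ := phiX_deg_monic (c := c) a hane
    have hXm : AddMonoidAlgebra.Monic (toLex : (V n →₀ ℕ) → Lex (V n →₀ ℕ))
        ((phi c n (X a)) ^ b) := pm.pow (fun _ _ => rfl) toLex.injective
    rw [hsplit, map_mul, map_pow]
    constructor
    · rw [hXm.supDegree_mul toLex.injective (fun _ _ => rfl) rfl ihm,
        pm.supDegree_pow rfl (fun _ _ => rfl) toLex.injective, pd, ihd, Lsum_sadd]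
      rfl
    · exact hXm.mul toLex.injective (fun _ _ => rfl) ihm

end PartC

section PartD
variable {c n : ℕ}

open Classical in
noncomputable def cif (p : Prop) (x : ℕ) : ℕ := if p then x else 0

lemma cif_pos {p : Prop} (h : p) (x : ℕ) : cif p x = x := by rw [cif, if_pos h]
lemma cif_neg {p : Prop} (h : ¬ p) (x : ℕ) : cif p x = 0 := by rw [cif, if_neg h]

lemma sum_cif_eq {α : Type*} [Fintype α] (b : α) (f : α → ℕ) :
    ∑ u : α, cif (b = u) (f u) = f b := by
  rw [Finset.sum_eq_single b (fun u _ hne => cif_neg (fun h => hne h.symm) _)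
    (fun h => absurd (Finset.mem_univ b) h)]
  exact cif_pos rfl _

noncomputable def cnt (μ : Idx n →₀ ℕ) (pr : PIdx n → Prop) : ℕ :=
  ∑ P : PIdx n, cif (pr P) (μ (Sum.inl P))

lemma cnt_congr {μ : Idx n →₀ ℕ} {pr pr' : PIdx n → Prop} (h : ∀ P, pr P ↔ pr' P) :
    cnt μ pr = cnt μ pr' := by
  refine Finset.sum_congr rfl fun P _ => ?_
  by_cases hp : pr P
  · rw [cif_pos hp, cif_pos ((h P).mp hp)]
  · rw [cif_neg hp, cif_neg (fun hp' => hp ((h P).mpr hp'))]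

lemma cnt_split (μ : Idx n →₀ ℕ) (pr A : PIdx n → Prop) :
    cnt μ pr = cnt μ (fun P => pr P ∧ A P) + cnt μ (fun P => pr P ∧ ¬ A P) := by
  unfold cnt
  rw [← Finset.sum_add_distrib]
  refine Finset.sum_congr rfl fun P _ => ?_
  by_cases hp : pr P <;> by_cases ha : A P
  · rw [cif_pos hp, cif_pos ⟨hp, ha⟩, cif_neg (fun h => h.2 ha)]; omega
  · rw [cif_pos hp, cif_neg (fun h => ha h.2), cif_pos ⟨hp, ha⟩]; omega
  · rw [cif_neg hp, cif_neg (fun h => hp h.1), cif_neg (fun h => hp h.1)]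
  · rw [cif_neg hp, cif_neg (fun h => hp h.1), cif_neg (fun h => hp h.1)]

lemma cnt_pos {μ : Idx n →₀ ℕ} {pr : PIdx n → Prop} (h : cnt μ pr ≠ 0) :
    ∃ P, pr P ∧ μ (Sum.inl P) ≠ 0 := by
  by_contra hc
  push_neg at hc
  apply h
  refine Finset.sum_eq_zero fun P _ => ?_
  by_cases hp : pr P
  · rw [cif_pos hp]; exact hc P hp
  · exact cif_neg hp _

lemma cnt_acc (μ : Idx n →₀ ℕ) (g : PIdx n → Fin n) (q : PIdx n → Prop) (i : Fin n) :
    cnt μ (fun P => g P ≤ i ∧ q P)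
      = ∑ u : Fin n, cif (u ≤ i) (cnt μ (fun P => g P = u ∧ q P)) := by
  unfold cnt
  have step1 : ∀ u : Fin n,
      cif (u ≤ i) (∑ P : PIdx n, cif (g P = u ∧ q P) (μ (Sum.inl P)))
        = ∑ P : PIdx n, cif (g P = u) (cif (g P ≤ i ∧ q P) (μ (Sum.inl P))) := by
    intro u
    by_cases hu : u ≤ i
    · rw [cif_pos hu]
      refine Finset.sum_congr rfl fun P _ => ?_
      by_cases he : g P = u
      · subst he
        by_cases hq : q P
        · rw [cif_pos ⟨rfl, hq⟩, cif_pos rfl, cif_pos ⟨hu, hq⟩]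
        · rw [cif_neg (fun h => hq h.2), cif_pos rfl, cif_neg (fun h => hq h.2)]
      · rw [cif_neg (fun h => he h.1), cif_neg he]
    · rw [cif_neg hu]
      symm
      refine Finset.sum_eq_zero fun P _ => ?_
      by_cases he : g P = u
      · subst he
        rw [cif_pos rfl, cif_neg (fun h => hu h.1)]
      · rw [cif_neg he]
  trans (∑ P : PIdx n, ∑ u : Fin n, cif (g P = u) (cif (g P ≤ i ∧ q P) (μ (Sum.inl P))))
  · refine Finset.sum_congr rfl fun P _ => ?_
    rw [sum_cif_eq (g P) (fun _ => cif (g P ≤ i ∧ q P) (μ (Sum.inl P)))]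
  · rw [Finset.sum_comm]
    exact Finset.sum_congr rfl fun u _ => (step1 u).symm

lemma cnt_partition (μ : Idx n →₀ ℕ) (g : PIdx n → Fin n) (q : PIdx n → Prop) :
    cnt μ q = ∑ u : Fin n, cnt μ (fun P => g P = u ∧ q P) := by
  unfold cnt
  rw [Finset.sum_comm]
  refine Finset.sum_congr rfl fun P _ => ?_
  symm
  calc ∑ u : Fin n, cif (g P = u ∧ q P) (μ (Sum.inl P))
      = ∑ u : Fin n, cif (g P = u) (cif (q P) (μ (Sum.inl P))) := by
        refine Finset.sum_congr rfl fun u _ => ?_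
        by_cases he : g P = u
        · by_cases hq : q P
          · rw [cif_pos ⟨he, hq⟩, cif_pos he, cif_pos hq]
          · rw [cif_neg (fun h => hq h.2), cif_pos he, cif_neg hq]
        · rw [cif_neg (fun h => he h.1), cif_neg he]
    _ = cif (q P) (μ (Sum.inl P)) := sum_cif_eq (g P) _

lemma mul_cif_one (p : Prop) (x : ℕ) : x * cif p 1 = cif p x := by
  by_cases h : p
  · rw [cif_pos h, cif_pos h, mul_one]
  · rw [cif_neg h, cif_neg h, mul_zero]

lemma Lsum_apply (μ : Idx n →₀ ℕ) (x : V n) :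
    Lsum c μ x = ∑ P : PIdx n, μ (Sum.inl P) * (lead c (Sum.inl P)) x := by
  rw [Lsum, Finsupp.sum_apply]
  have h1 : (μ.sum fun p k => (k • lead c p) x) = μ.sum fun p k => k * (lead c p) x := by
    refine Finsupp.sum_congr fun p _ => ?_
    rw [Finsupp.smul_apply, smul_eq_mul]
  rw [h1, Finsupp.sum_fintype _ _ (fun p => by rw [zero_mul])]
  rw [Fintype.sum_sum_type]
  have h2 : (∑ u : Unit, μ (Sum.inr u) * (lead c (Sum.inr u)) x) = 0 := by
    refine Finset.sum_eq_zero fun u _ => ?_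
    rw [lead]
    simp
  rw [h2, add_zero]

lemma lead_va (P : PIdx n) (u : Fin n) :
    (lead c (Sum.inl P)) (va u) = cif (P.1.1 = u ∧ P.1.1.val < c) 1 := by
  have b1 := u.isLt; have b2 := P.1.1.isLt; have b3 := P.1.2.isLt
  have hP : P.1.1.val < P.1.2.val := P.2
  rw [lead]
  split_ifs with h1 h2 <;>
  · by_cases he : P.1.1 = u
    · subst he
      by_cases hcv : P.1.1.val < c
      · rw [cif_pos ⟨rfl, hcv⟩]
        simp only [Finsupp.add_apply, Finsupp.single_apply, va, vb, ve, vf, Fin.ext_iff]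
        split_ifs <;> omega
      · rw [cif_neg (fun h => hcv h.2)]
        simp only [Finsupp.add_apply, Finsupp.single_apply, va, vb, ve, vf, Fin.ext_iff]
        split_ifs <;> omega
    · rw [cif_neg (fun h => he h.1)]
      have he' : P.1.1.val ≠ u.val := fun h => he (Fin.ext h)
      simp only [Finsupp.add_apply, Finsupp.single_apply, va, vb, ve, vf, Fin.ext_iff]
      split_ifs <;> omega

lemma lead_vb (P : PIdx n) (u : Fin n) :
    (lead c (Sum.inl P)) (vb u) = cif (P.1.2 = u ∧ P.1.2.val < c) 1 := by
  have b1 := u.isLt; have b2 := P.1.1.isLt; have b3 := P.1.2.isLt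
  have hP : P.1.1.val < P.1.2.val := P.2
  rw [lead]
  split_ifs with h1 h2 <;>
  · by_cases he : P.1.2 = u
    · subst he
      by_cases hcv : P.1.2.val < c
      · rw [cif_pos ⟨rfl, hcv⟩]
        simp only [Finsupp.add_apply, Finsupp.single_apply, va, vb, ve, vf, Fin.ext_iff]
        split_ifs <;> omega
      · rw [cif_neg (fun h => hcv h.2)]
        simp only [Finsupp.add_apply, Finsupp.single_apply, va, vb, ve, vf, Fin.ext_iff]
        split_ifs <;> omega
    · rw [cif_neg (fun h => he h.1)]
      have he' : P.1.2.val ≠ u.val := fun h => he (Fin.ext h)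
      simp only [Finsupp.add_apply, Finsupp.single_apply, va, vb, ve, vf, Fin.ext_iff]
      split_ifs <;> omega

lemma lead_ve (P : PIdx n) (u : Fin n) :
    (lead c (Sum.inl P)) (ve u) = cif (P.1.2 = u ∧ ¬ P.1.2.val < c) 1 := by
  have b1 := u.isLt; have b2 := P.1.1.isLt; have b3 := P.1.2.isLt
  have hP : P.1.1.val < P.1.2.val := P.2
  rw [lead]
  split_ifs with h1 h2 <;>
  · by_cases he : P.1.2 = u
    · subst he
      by_cases hcv : P.1.2.val < c
      · rw [cif_neg (fun h => h.2 hcv)]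
        simp only [Finsupp.add_apply, Finsupp.single_apply, va, vb, ve, vf, Fin.ext_iff]
        split_ifs <;> omega
      · rw [cif_pos ⟨rfl, hcv⟩]
        simp only [Finsupp.add_apply, Finsupp.single_apply, va, vb, ve, vf, Fin.ext_iff]
        split_ifs <;> omega
    · rw [cif_neg (fun h => he h.1)]
      have he' : P.1.2.val ≠ u.val := fun h => he (Fin.ext h)
      simp only [Finsupp.add_apply, Finsupp.single_apply, va, vb, ve, vf, Fin.ext_iff]
      split_ifs <;> omega

lemma lead_vf (P : PIdx n) (u : Fin n) :
    (lead c (Sum.inl P)) (vf u) = cif (P.1.1 = u ∧ ¬ P.1.1.val < c) 1 := by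
  have b1 := u.isLt; have b2 := P.1.1.isLt; have b3 := P.1.2.isLt
  have hP : P.1.1.val < P.1.2.val := P.2
  rw [lead]
  split_ifs with h1 h2 <;>
  · by_cases he : P.1.1 = u
    · subst he
      by_cases hcv : P.1.1.val < c
      · rw [cif_neg (fun h => h.2 hcv)]
        simp only [Finsupp.add_apply, Finsupp.single_apply, va, vb, ve, vf, Fin.ext_iff]
        split_ifs <;> omega
      · rw [cif_pos ⟨rfl, hcv⟩]
        simp only [Finsupp.add_apply, Finsupp.single_apply, va, vb, ve, vf, Fin.ext_iff]
        split_ifs <;> omega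
    · rw [cif_neg (fun h => he h.1)]
      have he' : P.1.1.val ≠ u.val := fun h => he (Fin.ext h)
      simp only [Finsupp.add_apply, Finsupp.single_apply, va, vb, ve, vf, Fin.ext_iff]
      split_ifs <;> omega

lemma Lsum_cnt_va (μ : Idx n →₀ ℕ) (u : Fin n) :
    Lsum c μ (va u) = cnt μ (fun P => P.1.1 = u ∧ P.1.1.val < c) := by
  rw [Lsum_apply]
  exact Finset.sum_congr rfl fun P _ => by rw [lead_va, mul_cif_one]

lemma Lsum_cnt_vb (μ : Idx n →₀ ℕ) (u : Fin n) :
    Lsum c μ (vb u) = cnt μ (fun P => P.1.2 = u ∧ P.1.2.val < c) := by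
  rw [Lsum_apply]
  exact Finset.sum_congr rfl fun P _ => by rw [lead_vb, mul_cif_one]

lemma Lsum_cnt_ve (μ : Idx n →₀ ℕ) (u : Fin n) :
    Lsum c μ (ve u) = cnt μ (fun P => P.1.2 = u ∧ ¬ P.1.2.val < c) := by
  rw [Lsum_apply]
  exact Finset.sum_congr rfl fun P _ => by rw [lead_ve, mul_cif_one]

lemma Lsum_cnt_vf (μ : Idx n →₀ ℕ) (u : Fin n) :
    Lsum c μ (vf u) = cnt μ (fun P => P.1.1 = u ∧ ¬ P.1.1.val < c) := by
  rw [Lsum_apply]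
  exact Finset.sum_congr rfl fun P _ => by rw [lead_vf, mul_cif_one]

end PartD

section PartD3
variable {c n : ℕ}

lemma within_min {μ : Idx n →₀ ℕ} (hμ : StdM μ) (τ : PIdx n → Prop) (i j : Fin n) :
    cnt μ (fun P => τ P ∧ P.1.1 ≤ i ∧ P.1.2 ≤ j)
      = min (cnt μ (fun P => τ P ∧ P.1.1 ≤ i)) (cnt μ (fun P => τ P ∧ P.1.2 ≤ j)) := by
  have e1 := cnt_split μ (fun P => τ P ∧ P.1.1 ≤ i) (fun P => P.1.2 ≤ j)
  have e2 := cnt_split μ (fun P => τ P ∧ P.1.2 ≤ j) (fun P => P.1.1 ≤ i)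
  have c1 : cnt μ (fun P => (τ P ∧ P.1.1 ≤ i) ∧ P.1.2 ≤ j)
      = cnt μ (fun P => τ P ∧ P.1.1 ≤ i ∧ P.1.2 ≤ j) := cnt_congr (fun P => and_assoc)
  have c2 : cnt μ (fun P => (τ P ∧ P.1.2 ≤ j) ∧ P.1.1 ≤ i)
      = cnt μ (fun P => τ P ∧ P.1.1 ≤ i ∧ P.1.2 ≤ j) := cnt_congr (fun P => by tauto)
  have hor : cnt μ (fun P => (τ P ∧ P.1.1 ≤ i) ∧ ¬ P.1.2 ≤ j) = 0
      ∨ cnt μ (fun P => (τ P ∧ P.1.2 ≤ j) ∧ ¬ P.1.1 ≤ i) = 0 := by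
    by_contra hc
    push_neg at hc
    obtain ⟨P, ⟨⟨_, hPi⟩, hPj⟩, hPμ⟩ := cnt_pos hc.1
    obtain ⟨Q, ⟨⟨_, hQj⟩, hQi⟩, hQμ⟩ := cnt_pos hc.2
    exact hμ.2 P Q hPμ hQμ
      ⟨lt_of_le_of_lt hPi (hQi), lt_of_le_of_lt hQj (hPj)⟩
  omega

lemma split_pm {μ : Idx n →₀ ℕ} (hμ : StdM μ) (i : Fin n) :
    cnt μ (fun P => P.1.2.val < c ∧ P.1.1 ≤ i)
      = min (cnt μ (fun P => P.1.1 ≤ i ∧ P.1.1.val < c))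
          (cnt μ (fun P => P.1.2.val < c)) := by
  have e1 := cnt_split μ (fun P => P.1.1 ≤ i ∧ P.1.1.val < c) (fun P => P.1.2.val < c)
  have e2 := cnt_split μ (fun P => P.1.2.val < c) (fun P => P.1.1 ≤ i)
  have c1 : cnt μ (fun P => (P.1.1 ≤ i ∧ P.1.1.val < c) ∧ P.1.2.val < c)
      = cnt μ (fun P => P.1.2.val < c ∧ P.1.1 ≤ i) := by
    refine cnt_congr fun P => ?_
    have hP : P.1.1.val < P.1.2.val := P.2
    constructor
    · rintro ⟨⟨h1, _⟩, h3⟩; exact ⟨h3, h1⟩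
    · rintro ⟨h3, h1⟩; exact ⟨⟨h1, by omega⟩, h3⟩
  have hor : cnt μ (fun P => (P.1.1 ≤ i ∧ P.1.1.val < c) ∧ ¬ P.1.2.val < c) = 0
      ∨ cnt μ (fun P => P.1.2.val < c ∧ ¬ P.1.1 ≤ i) = 0 := by
    by_contra hc
    push_neg at hc
    obtain ⟨P, ⟨⟨hPi, _⟩, hPs⟩, hPμ⟩ := cnt_pos hc.1
    obtain ⟨Q, ⟨hQs, hQi⟩, hQμ⟩ := cnt_pos hc.2
    refine hμ.2 P Q hPμ hQμ ⟨lt_of_le_of_lt hPi (hQi), Fin.lt_def.mpr (by omega)⟩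
  omega

lemma split_mq {μ : Idx n →₀ ℕ} (hμ : StdM μ) (k : Fin n) :
    cnt μ (fun P => (P.1.1.val < c ∧ ¬ P.1.2.val < c) ∧ P.1.2 ≤ k)
      = min (cnt μ (fun P => P.1.2 ≤ k ∧ ¬ P.1.2.val < c))
          (cnt μ (fun P => P.1.1.val < c ∧ ¬ P.1.2.val < c)) := by
  have e1 := cnt_split μ (fun P => P.1.2 ≤ k ∧ ¬ P.1.2.val < c) (fun P => P.1.1.val < c)
  have e2 := cnt_split μ (fun P => P.1.1.val < c ∧ ¬ P.1.2.val < c) (fun P => P.1.2 ≤ k)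
  have c1 : cnt μ (fun P => (P.1.2 ≤ k ∧ ¬ P.1.2.val < c) ∧ P.1.1.val < c)
      = cnt μ (fun P => (P.1.1.val < c ∧ ¬ P.1.2.val < c) ∧ P.1.2 ≤ k) :=
    cnt_congr fun P => by tauto
  have hor : cnt μ (fun P => (P.1.2 ≤ k ∧ ¬ P.1.2.val < c) ∧ ¬ P.1.1.val < c) = 0
      ∨ cnt μ (fun P => (P.1.1.val < c ∧ ¬ P.1.2.val < c) ∧ ¬ P.1.2 ≤ k) = 0 := by
    by_contra hc
    push_neg at hc
    obtain ⟨Q, ⟨⟨hQs, _⟩, hQf⟩, hQμ⟩ := cnt_pos hc.1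
    obtain ⟨P, ⟨⟨hPf, _⟩, hPs⟩, hPμ⟩ := cnt_pos hc.2
    refine hμ.2 P Q hPμ hQμ ⟨Fin.lt_def.mpr (by omega), lt_of_le_of_lt hQs (hPs)⟩
  omega

lemma recover {μ ν : Idx n →₀ ℕ} (τ : PIdx n → Prop)
    (h : ∀ i j : Fin n, cnt μ (fun P => τ P ∧ P.1.1 ≤ i ∧ P.1.2 ≤ j)
        = cnt ν (fun P => τ P ∧ P.1.1 ≤ i ∧ P.1.2 ≤ j)) :
    ∀ P, τ P → μ (Sum.inl P) = ν (Sum.inl P) := by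
  suffices key : ∀ t (P : PIdx n), τ P → P.1.1.val + P.1.2.val = t
      → μ (Sum.inl P) = ν (Sum.inl P) by
    exact fun P hP => key _ P hP rfl
  intro t
  induction t using Nat.strong_induction_on with
  | _ t ih =>
    intro P hτ ht
    have hsplit : ∀ ρ : Idx n →₀ ℕ,
        cnt ρ (fun Q => τ Q ∧ Q.1.1 ≤ P.1.1 ∧ Q.1.2 ≤ P.1.2)
          = ρ (Sum.inl P) + ∑ Q ∈ Finset.univ.erase P,
              cif (τ Q ∧ Q.1.1 ≤ P.1.1 ∧ Q.1.2 ≤ P.1.2) (ρ (Sum.inl Q)) := by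
      intro ρ
      rw [cnt, ← Finset.add_sum_erase _ _ (Finset.mem_univ P),
        cif_pos ⟨hτ, le_refl _, le_refl _⟩]
    have hrest : ∀ Q ∈ Finset.univ.erase P,
        cif (τ Q ∧ Q.1.1 ≤ P.1.1 ∧ Q.1.2 ≤ P.1.2) (μ (Sum.inl Q))
          = cif (τ Q ∧ Q.1.1 ≤ P.1.1 ∧ Q.1.2 ≤ P.1.2) (ν (Sum.inl Q)) := by
      intro Q hQ
      by_cases hc : τ Q ∧ Q.1.1 ≤ P.1.1 ∧ Q.1.2 ≤ P.1.2
      · rw [cif_pos hc, cif_pos hc]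
        have hne : Q ≠ P := Finset.ne_of_mem_erase hQ
        have h1 : Q.1.1.val ≤ P.1.1.val := hc.2.1
        have h2 : Q.1.2.val ≤ P.1.2.val := hc.2.2
        have hlt : Q.1.1.val + Q.1.2.val < t := by
          rcases Nat.lt_or_ge (Q.1.1.val + Q.1.2.val) t with hx | hx
          · exact hx
          · exfalso
            apply hne
            have hv1 : Q.1.1.val = P.1.1.val := by omega
            have hv2 : Q.1.2.val = P.1.2.val := by omega
            exact Subtype.ext (Prod.ext (Fin.ext hv1) (Fin.ext hv2))
        exact ih _ hlt Q hc.1 rfl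
      · rw [cif_neg hc, cif_neg hc]
    have hPP := h P.1.1 P.1.2
    rw [hsplit μ, hsplit ν, Finset.sum_congr rfl hrest] at hPP
    omega

end PartD3

section Glue
open AddMonoidAlgebra Finsupp
variable {c n : ℕ}

lemma Lsum_inj {μ ν : Idx n →₀ ℕ} (hμ : StdM μ) (hν : StdM ν) (h : Lsum c μ = Lsum c ν) :
    μ = ν := by
  have hva : ∀ u, cnt μ (fun P => P.1.1 = u ∧ P.1.1.val < c)
      = cnt ν (fun P => P.1.1 = u ∧ P.1.1.val < c) := fun u => by
    rw [← Lsum_cnt_va, ← Lsum_cnt_va, h]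
  have hvb : ∀ u, cnt μ (fun P => P.1.2 = u ∧ P.1.2.val < c)
      = cnt ν (fun P => P.1.2 = u ∧ P.1.2.val < c) := fun u => by
    rw [← Lsum_cnt_vb, ← Lsum_cnt_vb, h]
  have hve : ∀ u, cnt μ (fun P => P.1.2 = u ∧ ¬ P.1.2.val < c)
      = cnt ν (fun P => P.1.2 = u ∧ ¬ P.1.2.val < c) := fun u => by
    rw [← Lsum_cnt_ve, ← Lsum_cnt_ve, h]
  have hvf : ∀ u, cnt μ (fun P => P.1.1 = u ∧ ¬ P.1.1.val < c)
      = cnt ν (fun P => P.1.1 = u ∧ ¬ P.1.1.val < c) := fun u => by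
    rw [← Lsum_cnt_vf, ← Lsum_cnt_vf, h]
  have hA : ∀ i, cnt μ (fun P => P.1.1 ≤ i ∧ P.1.1.val < c)
      = cnt ν (fun P => P.1.1 ≤ i ∧ P.1.1.val < c) := fun i => by
    rw [cnt_acc μ (fun P => P.1.1) (fun P => P.1.1.val < c) i,
      cnt_acc ν (fun P => P.1.1) (fun P => P.1.1.val < c) i]
    exact Finset.sum_congr rfl fun u _ => by rw [hva u]
  have hB : ∀ j, cnt μ (fun P => P.1.2 ≤ j ∧ P.1.2.val < c)
      = cnt ν (fun P => P.1.2 ≤ j ∧ P.1.2.val < c) := fun j => by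
    rw [cnt_acc μ (fun P => P.1.2) (fun P => P.1.2.val < c) j,
      cnt_acc ν (fun P => P.1.2) (fun P => P.1.2.val < c) j]
    exact Finset.sum_congr rfl fun u _ => by rw [hvb u]
  have hE : ∀ k, cnt μ (fun P => P.1.2 ≤ k ∧ ¬ P.1.2.val < c)
      = cnt ν (fun P => P.1.2 ≤ k ∧ ¬ P.1.2.val < c) := fun k => by
    rw [cnt_acc μ (fun P => P.1.2) (fun P => ¬ P.1.2.val < c) k,
      cnt_acc ν (fun P => P.1.2) (fun P => ¬ P.1.2.val < c) k]
    exact Finset.sum_congr rfl fun u _ => by rw [hve u]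
  have hF : ∀ k, cnt μ (fun P => P.1.1 ≤ k ∧ ¬ P.1.1.val < c)
      = cnt ν (fun P => P.1.1 ≤ k ∧ ¬ P.1.1.val < c) := fun k => by
    rw [cnt_acc μ (fun P => P.1.1) (fun P => ¬ P.1.1.val < c) k,
      cnt_acc ν (fun P => P.1.1) (fun P => ¬ P.1.1.val < c) k]
    exact Finset.sum_congr rfl fun u _ => by rw [hvf u]
  have hPt : cnt μ (fun P => P.1.2.val < c) = cnt ν (fun P => P.1.2.val < c) := by
    rw [cnt_partition μ (fun P => P.1.2) (fun P => P.1.2.val < c),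
      cnt_partition ν (fun P => P.1.2) (fun P => P.1.2.val < c)]
    exact Finset.sum_congr rfl fun u _ => hvb u
  have hAt : cnt μ (fun P => P.1.1.val < c) = cnt ν (fun P => P.1.1.val < c) := by
    rw [cnt_partition μ (fun P => P.1.1) (fun P => P.1.1.val < c),
      cnt_partition ν (fun P => P.1.1) (fun P => P.1.1.val < c)]
    exact Finset.sum_congr rfl fun u _ => hva u
  have cAsplit : ∀ ρ : Idx n →₀ ℕ, cnt ρ (fun P => P.1.1.val < c)
      = cnt ρ (fun P => P.1.2.val < c)
        + cnt ρ (fun P => P.1.1.val < c ∧ ¬ P.1.2.val < c) := by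
    intro ρ
    have d := cnt_split ρ (fun P => P.1.1.val < c) (fun P => P.1.2.val < c)
    have c1 : cnt ρ (fun P => P.1.1.val < c ∧ P.1.2.val < c)
        = cnt ρ (fun P => P.1.2.val < c) := by
      refine cnt_congr fun P => ?_
      have hP : P.1.1.val < P.1.2.val := P.2
      exact ⟨fun hh => hh.2, fun hh => ⟨by omega, hh⟩⟩
    omega
  have hMt : cnt μ (fun P => P.1.1.val < c ∧ ¬ P.1.2.val < c)
      = cnt ν (fun P => P.1.1.val < c ∧ ¬ P.1.2.val < c) := by
    have := cAsplit μ; have := cAsplit ν; omega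
  -- p-type counting functions agree
  have hCp : ∀ i j, cnt μ (fun P => P.1.2.val < c ∧ P.1.1 ≤ i ∧ P.1.2 ≤ j)
      = cnt ν (fun P => P.1.2.val < c ∧ P.1.1 ≤ i ∧ P.1.2 ≤ j) := by
    intro i j
    rw [within_min hμ (fun P => P.1.2.val < c) i j, within_min hν (fun P => P.1.2.val < c) i j]
    have m1 : cnt μ (fun P => P.1.2.val < c ∧ P.1.1 ≤ i)
        = cnt ν (fun P => P.1.2.val < c ∧ P.1.1 ≤ i) := by
      rw [split_pm hμ i, split_pm hν i, hA i, hPt]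
    have m2 : cnt μ (fun P => P.1.2.val < c ∧ P.1.2 ≤ j)
        = cnt ν (fun P => P.1.2.val < c ∧ P.1.2 ≤ j) := by
      have cμ : cnt μ (fun P => P.1.2.val < c ∧ P.1.2 ≤ j)
          = cnt μ (fun P => P.1.2 ≤ j ∧ P.1.2.val < c) := cnt_congr fun P => by tauto
      have cν : cnt ν (fun P => P.1.2.val < c ∧ P.1.2 ≤ j)
          = cnt ν (fun P => P.1.2 ≤ j ∧ P.1.2.val < c) := cnt_congr fun P => by tauto
      rw [cμ, cν, hB j]
    rw [m1, m2]
  -- m-type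
  have hmf : ∀ i, cnt μ (fun P => (P.1.1.val < c ∧ ¬ P.1.2.val < c) ∧ P.1.1 ≤ i)
      = cnt ν (fun P => (P.1.1.val < c ∧ ¬ P.1.2.val < c) ∧ P.1.1 ≤ i) := by
    intro i
    have dsp : ∀ ρ : Idx n →₀ ℕ, (StdM ρ) → cnt ρ (fun P => P.1.1 ≤ i ∧ P.1.1.val < c)
        = cnt ρ (fun P => P.1.2.val < c ∧ P.1.1 ≤ i)
          + cnt ρ (fun P => (P.1.1.val < c ∧ ¬ P.1.2.val < c) ∧ P.1.1 ≤ i) := by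
      intro ρ _
      have d := cnt_split ρ (fun P => P.1.1 ≤ i ∧ P.1.1.val < c) (fun P => P.1.2.val < c)
      have g1 : cnt ρ (fun P => (P.1.1 ≤ i ∧ P.1.1.val < c) ∧ P.1.2.val < c)
          = cnt ρ (fun P => P.1.2.val < c ∧ P.1.1 ≤ i) := by
        refine cnt_congr fun P => ?_
        have hP : P.1.1.val < P.1.2.val := P.2
        constructor
        · rintro ⟨⟨h1, _⟩, h3⟩; exact ⟨h3, h1⟩
        · rintro ⟨h3, h1⟩; exact ⟨⟨h1, by omega⟩, h3⟩
      have g2 : cnt ρ (fun P => (P.1.1 ≤ i ∧ P.1.1.val < c) ∧ ¬ P.1.2.val < c)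
          = cnt ρ (fun P => (P.1.1.val < c ∧ ¬ P.1.2.val < c) ∧ P.1.1 ≤ i) :=
        cnt_congr fun P => by tauto
      omega
    have m1 : cnt μ (fun P => P.1.2.val < c ∧ P.1.1 ≤ i)
        = cnt ν (fun P => P.1.2.val < c ∧ P.1.1 ≤ i) := by
      rw [split_pm hμ i, split_pm hν i, hA i, hPt]
    have := dsp μ hμ; have := dsp ν hν; have := hA i
    omega
  have hCm : ∀ i k, cnt μ (fun P => (P.1.1.val < c ∧ ¬ P.1.2.val < c) ∧ P.1.1 ≤ i ∧ P.1.2 ≤ k)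
      = cnt ν (fun P => (P.1.1.val < c ∧ ¬ P.1.2.val < c) ∧ P.1.1 ≤ i ∧ P.1.2 ≤ k) := by
    intro i k
    rw [within_min hμ (fun P => P.1.1.val < c ∧ ¬ P.1.2.val < c) i k,
      within_min hν (fun P => P.1.1.val < c ∧ ¬ P.1.2.val < c) i k]
    have m2 : cnt μ (fun P => (P.1.1.val < c ∧ ¬ P.1.2.val < c) ∧ P.1.2 ≤ k)
        = cnt ν (fun P => (P.1.1.val < c ∧ ¬ P.1.2.val < c) ∧ P.1.2 ≤ k) := by
      rw [split_mq hμ k, split_mq hν k, hE k, hMt]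
    rw [hmf i, m2]
  -- q-type
  have hCq : ∀ k l, cnt μ (fun P => (¬ P.1.1.val < c) ∧ P.1.1 ≤ k ∧ P.1.2 ≤ l)
      = cnt ν (fun P => (¬ P.1.1.val < c) ∧ P.1.1 ≤ k ∧ P.1.2 ≤ l) := by
    intro k l
    rw [within_min hμ (fun P => ¬ P.1.1.val < c) k l,
      within_min hν (fun P => ¬ P.1.1.val < c) k l]
    have m1 : cnt μ (fun P => (¬ P.1.1.val < c) ∧ P.1.1 ≤ k)
        = cnt ν (fun P => (¬ P.1.1.val < c) ∧ P.1.1 ≤ k) := by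
      have cμ : cnt μ (fun P => (¬ P.1.1.val < c) ∧ P.1.1 ≤ k)
          = cnt μ (fun P => P.1.1 ≤ k ∧ ¬ P.1.1.val < c) := cnt_congr fun P => by tauto
      have cν : cnt ν (fun P => (¬ P.1.1.val < c) ∧ P.1.1 ≤ k)
          = cnt ν (fun P => P.1.1 ≤ k ∧ ¬ P.1.1.val < c) := cnt_congr fun P => by tauto
      rw [cμ, cν, hF k]
    have m2 : cnt μ (fun P => (¬ P.1.1.val < c) ∧ P.1.2 ≤ l)
        = cnt ν (fun P => (¬ P.1.1.val < c) ∧ P.1.2 ≤ l) := by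
      have dsp : ∀ ρ : Idx n →₀ ℕ, cnt ρ (fun P => P.1.2 ≤ l ∧ ¬ P.1.2.val < c)
          = cnt ρ (fun P => (P.1.1.val < c ∧ ¬ P.1.2.val < c) ∧ P.1.2 ≤ l)
            + cnt ρ (fun P => (¬ P.1.1.val < c) ∧ P.1.2 ≤ l) := by
        intro ρ
        have d := cnt_split ρ (fun P => P.1.2 ≤ l ∧ ¬ P.1.2.val < c) (fun P => P.1.1.val < c)
        have g1 : cnt ρ (fun P => (P.1.2 ≤ l ∧ ¬ P.1.2.val < c) ∧ P.1.1.val < c)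
            = cnt ρ (fun P => (P.1.1.val < c ∧ ¬ P.1.2.val < c) ∧ P.1.2 ≤ l) :=
          cnt_congr fun P => by tauto
        have g2 : cnt ρ (fun P => (P.1.2 ≤ l ∧ ¬ P.1.2.val < c) ∧ ¬ P.1.1.val < c)
            = cnt ρ (fun P => (¬ P.1.1.val < c) ∧ P.1.2 ≤ l) := by
          refine cnt_congr fun P => ?_
          have hP : P.1.1.val < P.1.2.val := P.2
          constructor
          · rintro ⟨⟨h1, _⟩, h3⟩; exact ⟨h3, h1⟩
          · rintro ⟨h3, h1⟩; exact ⟨⟨h1, by omega⟩, h3⟩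
        omega
      have mmq : cnt μ (fun P => (P.1.1.val < c ∧ ¬ P.1.2.val < c) ∧ P.1.2 ≤ l)
          = cnt ν (fun P => (P.1.1.val < c ∧ ¬ P.1.2.val < c) ∧ P.1.2 ≤ l) := by
        rw [split_mq hμ l, split_mq hν l, hE l, hMt]
      have := dsp μ; have := dsp ν; have := hE l
      omega
    rw [m1, m2]
  ext x
  obtain P | u := x
  · by_cases h1 : P.1.2.val < c
    · exact recover (fun P => P.1.2.val < c) hCp P h1
    · by_cases h2 : P.1.1.val < c
      · exact recover (fun P => P.1.1.val < c ∧ ¬ P.1.2.val < c) hCm P ⟨h2, h1⟩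
      · exact recover (fun P => ¬ P.1.1.val < c) hCq P h2
  · cases u
    rw [hμ.1, hν.1]


lemma supDegree_smul_eq {r : ℂ} (hr : r ≠ 0) (g : MvPolynomial (V n) ℂ) :
    AddMonoidAlgebra.supDegree (toLex : (V n →₀ ℕ) → Lex (V n →₀ ℕ)) (r • g)
      = AddMonoidAlgebra.supDegree (toLex : (V n →₀ ℕ) → Lex (V n →₀ ℕ)) g := by
  unfold AddMonoidAlgebra.supDegree
  congr 1
  exact Finsupp.support_smul_eq hr

lemma phi_inj_SM {f : MvPolynomial (Idx n) ℂ} (hf : f ∈ SM n) (h0 : phi c n f = 0) :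
    f = 0 := by
  by_contra hne
  apply absurd h0
  have hrw : phi c n f
      = ∑ e ∈ f.support, MvPolynomial.coeff e f • phi c n (MvPolynomial.monomial e 1) := by
    conv_lhs => rw [MvPolynomial.as_sum f]
    rw [map_sum]
    refine Finset.sum_congr rfl fun e he => ?_
    rw [← map_smul, MvPolynomial.smul_monomial, smul_eq_mul, mul_one]
  rw [hrw]
  apply AddMonoidAlgebra.sum_ne_zero_of_injOn_supDegree' (D := (toLex : (V n →₀ ℕ) → Lex (V n →₀ ℕ)))
  · obtain ⟨e, he⟩ := MvPolynomial.support_nonempty.mpr hne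
    exact ⟨e, he, smul_ne_zero (MvPolynomial.mem_support_iff.mp he)
      ((phi_mono_deg_monic (c := c) e (hf e he).1).2.ne_zero)⟩
  · intro e1 h1 e2 h2 hdeq
    simp only [Function.comp] at hdeq
    rw [supDegree_smul_eq (MvPolynomial.mem_support_iff.mp h1),
      supDegree_smul_eq (MvPolynomial.mem_support_iff.mp h2),
      (phi_mono_deg_monic (c := c) e1 (hf e1 h1).1).1,
      (phi_mono_deg_monic (c := c) e2 (hf e2 h2).1).1] at hdeq
    exact Lsum_inj (hf e1 h1) (hf e2 h2) (toLex.injective hdeq)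

lemma span_eq_ker : Ideal.span (JGens c n) = RingHom.ker (phi c n).toRingHom := by
  refine le_antisymm span_le_ker fun f hf => ?_
  have hmem : f ∈ SM n ⊔ (Ideal.span (JGens c n)).restrictScalars ℂ := by
    rw [sup_top (c := c)]; trivial
  obtain ⟨s, hs, j, hj, rfl⟩ := Submodule.mem_sup.mp hmem
  have hj' : j ∈ Ideal.span (JGens c n) := hj
  have hφj : phi c n j = 0 := span_le_ker hj'
  have hφs : phi c n s = 0 := by
    have h1 : phi c n (s + j) = 0 := hf
    rw [map_add, hφj, add_zero] at h1
    exact h1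
  rw [phi_inj_SM hs hφs, zero_add]
  exact hj'

theorem isPrime_span : (Ideal.span (JGens c n)).IsPrime := by
  rw [span_eq_ker]
  exact RingHom.ker_isPrime _

end Glue

end Stmt7

/-- For `c, d > 2` and `n = c + d`, the ideal `J` generated by `T_∞`, the binomials
`-T_{ik}T_{jl} + T_{il}T_{jk}` for `i < j ≤ c < k < l`, and the Plücker trinomials
for all other quadruples, is prime. -/
theorem stmt_7 (c d : ℕ) (hc : 2 < c) (hd : 2 < d) :
    (Ideal.span (JGens c (c + d))).IsPrime :=
  Stmt7.isPrime_span
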